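/- Let r > 1/2 and v ≥ 0 be real numbers, and let (s_j)_{j≥1} and (t_j)_{j≥1} be sequences of positive reals satisfying c₁ j^{−2r} ≤ s_j ≤ c₂ j^{−2r} and c₃ s_j ≤ t_j ≤ c₄ s_j for all j ≥ 1, for some positive constants c₁, c₂, c₃, c₄. Then there exist constants 0 < c ≤ C, depending only on r, v, c₁, c₂, c₃, c₄, such that for every λ ∈ (0,1]: c · λ^{−1/(2r)} ≤ Σ_{j≥1} s_j^{1+2v} / (t_j + λ)^{1+2v} ≤ C · (1 + λ^{−1/(2r)}). -/

import Mathlib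

open Real

/-- Key convexity estimate: for `x ≥ 2` and `q ≥ 1`,
`(q-1) * x^(-q) ≤ (x-1)^(1-q) - x^(1-q)`. -/
lemma key_telescope {x q : ℝ} (hx : 2 ≤ x) (hq : 1 ≤ q) :
    (q - 1) * x ^ (-q) ≤ (x - 1) ^ (1 - q) - x ^ (1 - q) := by
  have hx0 : (0:ℝ) < x := by linarith
  have hxm : (0:ℝ) < x - 1 := by linarith
  have hB : 1 + q * (1 / (x - 1)) ≤ (1 + 1 / (x - 1)) ^ q :=
    one_add_mul_self_le_rpow_one_add (le_trans (by norm_num : (-1:ℝ) ≤ 0) (by positivity)) hq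
  have hA : 1 + 1 / (x - 1) = x / (x - 1) := by field_simp; ring
  rw [hA] at hB
  have hApos : (0:ℝ) < x / (x - 1) := by positivity
  have e : (x / (x - 1)) ^ (q - 1) = (x / (x - 1)) ^ q / (x / (x - 1)) := by
    have e' := Real.rpow_sub hApos q 1
    rwa [Real.rpow_one] at e'
  have h1 : 1 + (q - 1) / x ≤ (x / (x - 1)) ^ (q - 1) := by
    rw [e, le_div_iff₀ hApos]
    calc (1 + (q - 1) / x) * (x / (x - 1)) = 1 + q * (1 / (x - 1)) := by
          field_simp
          ring
      _ ≤ (x / (x - 1)) ^ q := hB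
  have hxq : (0:ℝ) < x ^ (1 - q) := Real.rpow_pos_of_pos hx0 _
  have h2 : (1 + (q - 1) / x) * x ^ (1 - q) ≤ (x / (x - 1)) ^ (q - 1) * x ^ (1 - q) :=
    mul_le_mul_of_nonneg_right h1 hxq.le
  have e1 : (x / (x - 1)) ^ (q - 1) * x ^ (1 - q) = (x - 1) ^ (1 - q) := by
    rw [Real.div_rpow hx0.le hxm.le, div_mul_eq_mul_div, ← Real.rpow_add hx0]
    have h0 : q - 1 + (1 - q) = 0 := by ring
    rw [h0, Real.rpow_zero, one_div, ← Real.rpow_neg hxm.le]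
    congr 1
    ring
  have e2 : (1 + (q - 1) / x) * x ^ (1 - q) = x ^ (1 - q) + (q - 1) * x ^ (-q) := by
    have hdiv : x ^ (1 - q) / x = x ^ (-q) := by
      have e' := Real.rpow_sub hx0 (1 - q) 1
      rw [Real.rpow_one] at e'
      rw [← e']
      congr 1
      ring
    rw [add_mul, one_mul, div_mul_eq_mul_div, mul_div_assoc, hdiv]
  rw [e1, e2] at h2
  linarith

/-- Tail estimate: for `q > 1` and `M ≥ 1`,
`∑_{i} (i+M+1)^{-q} ≤ M^{1-q} / (q-1)`. -/
lemma tail_bound {q : ℝ} (hq : 1 < q) (M : ℕ) (hM : 1 ≤ M) :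
    ∑' i : ℕ, ((i + M + 1 : ℕ) : ℝ) ^ (-q) ≤ (M : ℝ) ^ (1 - q) / (q - 1) := by
  have hq1 : (0:ℝ) < q - 1 := by linarith
  set g : ℕ → ℝ := fun i => ((i + M : ℕ) : ℝ) ^ (1 - q) with hg
  have hkey : ∀ i : ℕ, ((i + M + 1 : ℕ) : ℝ) ^ (-q) ≤ (g i - g (i + 1)) / (q - 1) := by
    intro i
    have hx : (2:ℝ) ≤ ((i + M + 1 : ℕ) : ℝ) := by
      have h2 : (2:ℕ) ≤ i + M + 1 := by omega
      exact_mod_cast h2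
    have hk := key_telescope hx hq.le
    rw [le_div_iff₀ hq1]
    have e : ((i + M + 1 : ℕ) : ℝ) - 1 = ((i + M : ℕ) : ℝ) := by push_cast; ring
    rw [e] at hk
    have e2 : ((i + 1 + M : ℕ) : ℝ) = ((i + M + 1 : ℕ) : ℝ) := by push_cast; ring
    simp only [hg, e2]
    linarith
  have hbound : ∀ n : ℕ, ∑ i ∈ Finset.range n, ((i + M + 1 : ℕ) : ℝ) ^ (-q)
      ≤ (M : ℝ) ^ (1 - q) / (q - 1) := by
    intro n
    calc ∑ i ∈ Finset.range n, ((i + M + 1 : ℕ) : ℝ) ^ (-q)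
        ≤ ∑ i ∈ Finset.range n, (g i - g (i + 1)) / (q - 1) :=
          Finset.sum_le_sum fun i _ => hkey i
      _ = (g 0 - g n) / (q - 1) := by
          rw [← Finset.sum_div, Finset.sum_range_sub' g]
      _ ≤ g 0 / (q - 1) := by
          have hgn : 0 ≤ g n := Real.rpow_nonneg (by positivity) _
          gcongr
          linarith
      _ = (M : ℝ) ^ (1 - q) / (q - 1) := by simp [hg]
  exact tsum_le_of_sum_range_le (fun i => Real.rpow_nonneg (by positivity) _) hbound

set_option maxHeartbeats 1000000 in
/-- Lemma 6. If `s j ≍ j^{-2r}` and `t j ≍ s j` (for `j ≥ 1`), `r > 1/2`,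
`v ≥ 0`, then there are constants `0 < c ≤ C` (depending only on `r, v, c₁, c₂, c₃, c₄`)
such that for all `λ ∈ (0,1]`:
`c λ^{-1/(2r)} ≤ Σ_{j≥1} s_j^{1+2v} / (t_j + λ)^{1+2v} ≤ C (1 + λ^{-1/(2r)})`. -/
theorem stmt_1 (r v : ℝ) (hr : 1 / 2 < r) (hv : 0 ≤ v)
    (s t : ℕ → ℝ) (c₁ c₂ c₃ c₄ : ℝ)
    (hc₁ : 0 < c₁) (hc₂ : 0 < c₂) (hc₃ : 0 < c₃) (hc₄ : 0 < c₄)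
    (hs_pos : ∀ j : ℕ, 1 ≤ j → 0 < s j) (ht_pos : ∀ j : ℕ, 1 ≤ j → 0 < t j)
    (hs_lb : ∀ j : ℕ, 1 ≤ j → c₁ * (j : ℝ) ^ (-(2 * r)) ≤ s j)
    (hs_ub : ∀ j : ℕ, 1 ≤ j → s j ≤ c₂ * (j : ℝ) ^ (-(2 * r)))
    (ht_lb : ∀ j : ℕ, 1 ≤ j → c₃ * s j ≤ t j)
    (ht_ub : ∀ j : ℕ, 1 ≤ j → t j ≤ c₄ * s j) :
    ∃ c C : ℝ, 0 < c ∧ c ≤ C ∧ ∀ lam : ℝ, 0 < lam → lam ≤ 1 →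
      c * lam ^ (-(1 / (2 * r))) ≤
        (∑' j : ℕ, s (j + 1) ^ (1 + 2 * v) / (t (j + 1) + lam) ^ (1 + 2 * v)) ∧
      (∑' j : ℕ, s (j + 1) ^ (1 + 2 * v) / (t (j + 1) + lam) ^ (1 + 2 * v)) ≤
        C * (1 + lam ^ (-(1 / (2 * r)))) := by
  set p : ℝ := 1 + 2 * v with hpdef
  have hp1 : 1 ≤ p := by rw [hpdef]; linarith
  have hp0 : 0 < p := by linarith
  have hr0 : (0:ℝ) < 2 * r := by linarith
  set q : ℝ := 2 * r * p with hqdef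
  have hq1 : 1 < q := by
    rw [hqdef]; nlinarith
  set K : ℝ := c₁ / (c₁ * c₄ + 1) with hKdef
  have hK0 : 0 < K := by positivity
  have hKp0 : 0 < K ^ p := Real.rpow_pos_of_pos hK0 _
  have hCu1 : (0:ℝ) < (1 / c₃) ^ p := Real.rpow_pos_of_pos (by positivity) _
  have hCu2 : (0:ℝ) ≤ c₂ ^ p / (q - 1) :=
    div_nonneg (Real.rpow_nonneg hc₂.le _) (by linarith)
  refine ⟨K ^ p / 2, ((1 / c₃) ^ p + c₂ ^ p / (q - 1)) + K ^ p / 2, by positivity,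
    by linarith, ?_⟩
  intro lam hlam hlam1
  set x : ℝ := lam ^ (-(1 / (2 * r))) with hxdef
  have hx1 : 1 ≤ x :=
    Real.one_le_rpow_of_pos_of_le_one_of_nonpos hlam hlam1 (by
      rw [neg_nonpos]
      positivity)
  have hx0 : (0:ℝ) < x := by linarith
  have hx2r : x ^ (2 * r) = lam⁻¹ := by
    rw [hxdef, ← Real.rpow_mul hlam.le]
    have h : -(1 / (2 * r)) * (2 * r) = -1 := by field_simp
    rw [h, Real.rpow_neg_one]
  -- the general term
  set f : ℕ → ℝ := fun j => s (j + 1) ^ p / (t (j + 1) + lam) ^ p with hfdef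
  have htl_pos : ∀ j : ℕ, 0 < t (j + 1) + lam := by
    intro j
    have := ht_pos (j + 1) (by omega)
    linarith
  have hfterm : ∀ j : ℕ, f j = (s (j + 1) / (t (j + 1) + lam)) ^ p := by
    intro j
    rw [hfdef]
    rw [Real.div_rpow (hs_pos (j + 1) (by omega)).le (htl_pos j).le]
  have hfnn : ∀ j : ℕ, 0 ≤ f j := by
    intro j
    rw [hfterm]
    exact Real.rpow_nonneg (div_nonneg (hs_pos (j + 1) (by omega)).le (htl_pos j).le) _
  -- per-term upper bound for summability and the tail
  have hfub : ∀ j : ℕ, f j ≤ (c₂ / lam) ^ p * ((j + 1 : ℕ) : ℝ) ^ (-q) := by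
    intro j
    have hj1 : 1 ≤ j + 1 := by omega
    have hjpos : (0:ℝ) < ((j + 1 : ℕ) : ℝ) := by positivity
    have hspos := hs_pos (j + 1) hj1
    have h1 : s (j + 1) / (t (j + 1) + lam) ≤ c₂ * ((j + 1 : ℕ) : ℝ) ^ (-(2 * r)) / lam := by
      calc s (j + 1) / (t (j + 1) + lam) ≤ s (j + 1) / lam := by
            gcongr
            linarith [ht_pos (j + 1) hj1]
        _ ≤ c₂ * ((j + 1 : ℕ) : ℝ) ^ (-(2 * r)) / lam := by
            gcongr
            exact hs_ub (j + 1) hj1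
    have h2 : f j ≤ (c₂ * ((j + 1 : ℕ) : ℝ) ^ (-(2 * r)) / lam) ^ p := by
      rw [hfterm]
      exact Real.rpow_le_rpow (div_nonneg hspos.le (htl_pos j).le) h1 hp0.le
    refine h2.trans_eq ?_
    have e1 : c₂ * ((j + 1 : ℕ) : ℝ) ^ (-(2 * r)) / lam
        = (c₂ / lam) * ((j + 1 : ℕ) : ℝ) ^ (-(2 * r)) := by ring
    rw [e1, Real.mul_rpow (by positivity) (Real.rpow_nonneg hjpos.le _),
      ← Real.rpow_mul hjpos.le]
    congr 1
    rw [hqdef]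
    ring
  have hbase : Summable (fun n : ℕ => (n : ℝ) ^ (-q)) :=
    Real.summable_nat_rpow.mpr (by linarith)
  have hB : Summable (fun j : ℕ => (c₂ / lam) ^ p * ((j + 1 : ℕ) : ℝ) ^ (-q)) :=
    (((summable_nat_add_iff 1).mpr hbase)).mul_left _
  have hsum : Summable f := Summable.of_nonneg_of_le hfnn hfub hB
  constructor
  · -- lower bound
    set N₁ : ℕ := ⌊x⌋₊ with hN₁def
    have hN₁1 : 1 ≤ N₁ := Nat.le_floor (by exact_mod_cast hx1)
    have hN₁x : (N₁ : ℝ) ≤ x := Nat.floor_le hx0.le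
    have hN₁R : (1:ℝ) ≤ (N₁ : ℝ) := by exact_mod_cast hN₁1
    have hxN₁ : x ≤ 2 * (N₁ : ℝ) := by
      have := Nat.sub_one_lt_floor x
      rw [← hN₁def] at this
      linarith
    have hterm : ∀ i ∈ Finset.range N₁, K ^ p ≤ f i := by
      intro i hi
      rw [Finset.mem_range] at hi
      have hj1 : 1 ≤ i + 1 := by omega
      have hjpos : (0:ℝ) < ((i + 1 : ℕ) : ℝ) := by positivity
      have hjx : ((i + 1 : ℕ) : ℝ) ≤ x := by
        have : ((i + 1 : ℕ) : ℝ) ≤ (N₁ : ℝ) := by exact_mod_cast (by omega : i + 1 ≤ N₁)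
        linarith
      have hspos := hs_pos (i + 1) hj1
      -- lam ≤ (i+1)^(-2r)
      have hjp : ((i + 1 : ℕ) : ℝ) ^ (2 * r) ≤ lam⁻¹ := by
        rw [← hx2r]
        exact Real.rpow_le_rpow hjpos.le hjx hr0.le
      have hlamj : lam ≤ ((i + 1 : ℕ) : ℝ) ^ (-(2 * r)) := by
        have hjp0 : (0:ℝ) < ((i + 1 : ℕ) : ℝ) ^ (2 * r) := Real.rpow_pos_of_pos hjpos _
        have h := one_div_le_one_div_of_le hjp0 hjp
        rw [one_div, one_div, inv_inv] at h
        rwa [Real.rpow_neg hjpos.le]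
      have hlams : lam ≤ s (i + 1) / c₁ := by
        have := hs_lb (i + 1) hj1
        rw [le_div_iff₀ hc₁]
        calc lam * c₁ ≤ ((i + 1 : ℕ) : ℝ) ^ (-(2 * r)) * c₁ :=
              mul_le_mul_of_nonneg_right hlamj hc₁.le
          _ = c₁ * ((i + 1 : ℕ) : ℝ) ^ (-(2 * r)) := mul_comm _ _
          _ ≤ s (i + 1) := hs_lb (i + 1) hj1
      have hts : t (i + 1) + lam ≤ (c₄ + 1 / c₁) * s (i + 1) := by
        have h1 := ht_ub (i + 1) hj1
        have h2 : lam ≤ (1 / c₁) * s (i + 1) := by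
          rw [one_div, inv_mul_eq_div]
          exact hlams
        linarith [h1, h2, (by ring : (c₄ + 1 / c₁) * s (i + 1)
          = c₄ * s (i + 1) + (1 / c₁) * s (i + 1))]
      have hKle : K ≤ s (i + 1) / (t (i + 1) + lam) := by
        rw [le_div_iff₀ (htl_pos i)]
        have hKc : K * (c₄ + 1 / c₁) = 1 := by
          rw [hKdef]
          field_simp
          all_goals ring
        calc K * (t (i + 1) + lam) ≤ K * ((c₄ + 1 / c₁) * s (i + 1)) := by
              exact mul_le_mul_of_nonneg_left hts hK0.le
          _ = s (i + 1) := by rw [← mul_assoc, hKc, one_mul]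
      rw [hfterm]
      exact Real.rpow_le_rpow hK0.le hKle hp0.le
    have hsumlb : (N₁ : ℝ) * K ^ p ≤ ∑ i ∈ Finset.range N₁, f i := by
      have h := Finset.sum_le_sum hterm
      rw [Finset.sum_const, Finset.card_range, nsmul_eq_mul] at h
      exact h
    calc K ^ p / 2 * x ≤ K ^ p / 2 * (2 * (N₁ : ℝ)) := by
          exact mul_le_mul_of_nonneg_left hxN₁ (by positivity)
      _ = (N₁ : ℝ) * K ^ p := by ring
      _ ≤ ∑ i ∈ Finset.range N₁, f i := hsumlb
      _ ≤ ∑' j : ℕ, f j := Summable.sum_le_tsum _ (fun i _ => hfnn i) hsum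
  · -- upper bound
    set N₂ : ℕ := ⌈x⌉₊ with hN₂def
    have hN₂1 : 1 ≤ N₂ := Nat.one_le_ceil_iff.mpr hx0
    have hN₂x : x ≤ (N₂ : ℝ) := Nat.le_ceil x
    have hN₂R : (0:ℝ) < (N₂ : ℝ) := by
      exact_mod_cast Nat.lt_of_lt_of_le Nat.zero_lt_one hN₂1
    have hN₂ub : (N₂ : ℝ) ≤ 1 + x := by
      have := Nat.ceil_lt_add_one hx0.le
      rw [← hN₂def] at this
      linarith
    have hsplit := Summable.sum_add_tsum_nat_add (f := f) N₂ hsum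
    -- head bound
    have hhead : ∑ i ∈ Finset.range N₂, f i ≤ (N₂ : ℝ) * (1 / c₃) ^ p := by
      have hterm : ∀ i ∈ Finset.range N₂, f i ≤ (1 / c₃) ^ p := by
        intro i _
        have hj1 : 1 ≤ i + 1 := by omega
        have hspos := hs_pos (i + 1) hj1
        have h1 : s (i + 1) / (t (i + 1) + lam) ≤ 1 / c₃ := by
          rw [div_le_div_iff₀ (htl_pos i) hc₃]
          have := ht_lb (i + 1) hj1
          nlinarith
        rw [hfterm]
        exact Real.rpow_le_rpow (div_nonneg hspos.le (htl_pos i).le) h1 hp0.le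
      have h := Finset.sum_le_sum hterm
      rw [Finset.sum_const, Finset.card_range, nsmul_eq_mul] at h
      exact h
    -- tail bound
    have htail : ∑' i : ℕ, f (i + N₂)
        ≤ (c₂ / lam) ^ p * ((N₂ : ℝ) ^ (1 - q) / (q - 1)) := by
      have h1 : ∑' i : ℕ, f (i + N₂)
          ≤ ∑' i : ℕ, (c₂ / lam) ^ p * ((i + N₂ + 1 : ℕ) : ℝ) ^ (-q) := by
        apply Summable.tsum_le_tsum
        · intro i
          exact hfub (i + N₂)
        · exact (summable_nat_add_iff N₂).mpr hsum
        · exact ((summable_nat_add_iff (N₂ + 1)).mpr hbase).mul_left _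
      rw [tsum_mul_left] at h1
      refine h1.trans ?_
      exact mul_le_mul_of_nonneg_left (tail_bound hq1 N₂ hN₂1)
        (Real.rpow_nonneg (by positivity) _)
    -- simplify the tail constant
    have hNlam : (N₂ : ℝ) ^ (-(2 * r)) ≤ lam := by
      have h1 : lam⁻¹ ≤ (N₂ : ℝ) ^ (2 * r) := by
        rw [← hx2r]
        exact Real.rpow_le_rpow hx0.le hN₂x hr0.le
      have hNp : (0:ℝ) < (N₂ : ℝ) ^ (2 * r) := Real.rpow_pos_of_pos hN₂R _
      have h := one_div_le_one_div_of_le (by positivity) h1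
      rw [one_div, one_div, inv_inv] at h
      rwa [Real.rpow_neg hN₂R.le]
    have htail2 : (c₂ / lam) ^ p * ((N₂ : ℝ) ^ (1 - q) / (q - 1))
        ≤ c₂ ^ p / (q - 1) * (N₂ : ℝ) := by
      set u : ℝ := (N₂ : ℝ) ^ (-(2 * r)) / lam with hudef
      have hu0 : 0 ≤ u := div_nonneg (Real.rpow_nonneg hN₂R.le _) hlam.le
      have hu1 : u ≤ 1 := by
        rw [hudef, div_le_one hlam]
        exact hNlam
      have hup : u ^ p ≤ 1 := Real.rpow_le_one hu0 hu1 hp0.le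
      have heq : (c₂ / lam) ^ p * ((N₂ : ℝ) ^ (1 - q) / (q - 1))
          = c₂ ^ p / (q - 1) * (N₂ : ℝ) * u ^ p := by
        have e1 : (c₂ / lam) ^ p = c₂ ^ p / lam ^ p := Real.div_rpow hc₂.le hlam.le p
        have e2 : u ^ p = ((N₂ : ℝ) ^ (-(2 * r))) ^ p / lam ^ p :=
          Real.div_rpow (Real.rpow_nonneg hN₂R.le _) hlam.le p
        have e3 : ((N₂ : ℝ) ^ (-(2 * r))) ^ p = (N₂ : ℝ) ^ (-q) := by
          rw [← Real.rpow_mul hN₂R.le]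
          congr 1
          rw [hqdef]; ring
        have e4 : (N₂ : ℝ) ^ (1 - q) = (N₂ : ℝ) * (N₂ : ℝ) ^ (-q) := by
          nth_rewrite 2 [← Real.rpow_one (N₂ : ℝ)]
          rw [← Real.rpow_add hN₂R]
          congr 1
        rw [e1, e2, e3, e4]
        ring
      rw [heq]
      calc c₂ ^ p / (q - 1) * (N₂ : ℝ) * u ^ p ≤ c₂ ^ p / (q - 1) * (N₂ : ℝ) * 1 := by
            exact mul_le_mul_of_nonneg_left hup (by positivity)
        _ = c₂ ^ p / (q - 1) * (N₂ : ℝ) := by ring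
    have hfinal : ∑' j : ℕ, f j ≤ ((1 / c₃) ^ p + c₂ ^ p / (q - 1)) * (N₂ : ℝ) := by
      rw [← hsplit]
      have := htail.trans htail2
      nlinarith [hhead, this]
    refine hfinal.trans ?_
    have h1x : (0:ℝ) ≤ 1 + x := by linarith
    have hCu : (0:ℝ) ≤ (1 / c₃) ^ p + c₂ ^ p / (q - 1) := by linarith
    calc ((1 / c₃) ^ p + c₂ ^ p / (q - 1)) * (N₂ : ℝ)
        ≤ ((1 / c₃) ^ p + c₂ ^ p / (q - 1)) * (1 + x) :=
          mul_le_mul_of_nonneg_left hN₂ub hCu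
      _ ≤ (((1 / c₃) ^ p + c₂ ^ p / (q - 1)) + K ^ p / 2) * (1 + x) := by
          nlinarith [hKp0, h1x]
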